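/- arXiv:1806.05962 — 2 statements merged into one kernel-verified Lean document; each statement's English description precedes it below -/
import Mathlib

section
/- Let f(x) = a_0x + a_1x^q + ... + a_{k-1}x^{q^{k-1}} - x^{q^k} ∈ F_{q^n}[x] with a_0 ≠ 0, let A be its k×k companion matrix (subdiagonal 1's, last column (a_0,...,a_{k-1})^T), and set B = A·A^q·...·A^{q^{n-1}}. Then the splitting field of f over F_{q^n} is F_{q^{nm}}, where m is the multiplicative order of the matrix B. -/
open Matrix Polynomial

def stmt17comp {E : Type*} [Field E] {k : ℕ} (c : Fin k → E) : Matrix (Fin k) (Fin k) E :=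
  Matrix.of fun i j : Fin k =>
    if (i : ℕ) = (j : ℕ) + 1 then 1 else if (j : ℕ) = k - 1 then c i else 0

lemma stmt17twist {E : Type*} [Field E] {p : ℕ} [hp : Fact p.Prime] [CharP E p]
    {e q k : ℕ} (hq : p ^ e = q) (c : Fin k → E) (x : E)
    (hx : x ^ q ^ k = ∑ i : Fin k, c i * x ^ q ^ (i : ℕ)) (s : ℕ) :
    (x ^ q ^ s) ^ q ^ k = ∑ i : Fin k, (c i ^ q ^ s) * (x ^ q ^ s) ^ q ^ (i : ℕ) := by
  have hψ : ∀ y : E, iterateFrobenius E p (e * s) y = y ^ q ^ s := by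
    intro y
    rw [iterateFrobenius_def, ← hq, ← pow_mul, mul_comm e s, pow_mul, ← pow_mul, mul_comm]
  have h1 : (x ^ q ^ s) ^ q ^ k = iterateFrobenius E p (e * s) (x ^ q ^ k) := by
    rw [map_pow, hψ]
  rw [h1, hx, map_sum]
  refine Finset.sum_congr rfl fun i _ => ?_
  rw [_root_.map_mul, map_pow, hψ, hψ]

lemma stmt17comp_pow {E : Type*} [Field E] {q k : ℕ} (hq0 : q ≠ 0) (c : Fin k → E) (s : ℕ) :
    (stmt17comp c).map (· ^ q ^ s) = stmt17comp (fun i => c i ^ q ^ s) := by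
  funext i j
  simp only [stmt17comp, Matrix.map_apply, Matrix.of_apply]
  split_ifs <;> simp [zero_pow, pow_ne_zero _ hq0, hq0]

lemma stmt17key1 {E : Type*} [Field E] {q k : ℕ} (hk : 0 < k) (c : Fin k → E) (x : E)
    (hx : x ^ q ^ k = ∑ i : Fin k, c i * x ^ q ^ (i : ℕ)) :
    Matrix.vecMul (fun i : Fin k => x ^ q ^ (i : ℕ)) (stmt17comp c)
      = fun i : Fin k => (x ^ q) ^ q ^ (i : ℕ) := by
  funext j
  have hpow : ∀ i : ℕ, (x ^ q) ^ q ^ i = x ^ q ^ (i + 1) := by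
    intro i
    rw [← pow_mul, pow_succ, mul_comm (q ^ i) q, pow_mul]
  rw [Matrix.vecMul, dotProduct]
  by_cases hj : (j : ℕ) + 1 < k
  · have hjne : (j : ℕ) ≠ k - 1 := by omega
    have : ∀ i : Fin k, (fun i : Fin k => x ^ q ^ (i : ℕ)) i * stmt17comp c i j
        = if i = (⟨(j : ℕ) + 1, hj⟩ : Fin k) then x ^ q ^ ((j : ℕ) + 1) else 0 := by
      intro i
      simp only [stmt17comp, Matrix.of_apply]
      rcases eq_or_ne i (⟨(j : ℕ) + 1, hj⟩ : Fin k) with h | h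
      · subst h; simp [hjne]
      · have : (i : ℕ) ≠ (j : ℕ) + 1 := by
          intro hc; exact h (Fin.ext hc)
        simp [this, hjne, h]
    rw [Finset.sum_congr rfl fun i _ => this i, Finset.sum_ite_eq' Finset.univ]
    simp [hpow]
  · have hjeq : (j : ℕ) = k - 1 := by
      have := j.isLt; omega
    have : ∀ i : Fin k, (fun i : Fin k => x ^ q ^ (i : ℕ)) i * stmt17comp c i j
        = c i * x ^ q ^ (i : ℕ) := by
      intro i
      simp only [stmt17comp, Matrix.of_apply]
      have h2 : (i : ℕ) ≠ k - 1 + 1 := by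
        have := i.isLt; omega
      simp [h2, hjeq, mul_comm]
    rw [Finset.sum_congr rfl fun i _ => this i, ← hx, hpow]
    have h3 : (j : ℕ) + 1 = k := by omega
    rw [h3]

lemma stmt17key4 {E : Type*} [Field E] {p : ℕ} [hp : Fact p.Prime] [CharP E p]
    {e q k : ℕ} (hq : p ^ e = q) (hq0 : q ≠ 0) (hk : 0 < k) (c : Fin k → E) (x : E)
    (hx : x ^ q ^ k = ∑ i : Fin k, c i * x ^ q ^ (i : ℕ)) (s : ℕ) :
    Matrix.vecMul (fun i : Fin k => x ^ q ^ (i : ℕ))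
        (((List.range s).map (fun t => (stmt17comp c).map (· ^ q ^ t))).prod)
      = fun i : Fin k => (x ^ q ^ s) ^ q ^ (i : ℕ) := by
  induction s with
  | zero => simp [Matrix.vecMul_one]
  | succ s ih =>
    rw [List.range_succ, List.map_append, List.prod_append, List.map_singleton,
      List.prod_singleton, ← Matrix.vecMul_vecMul, ih, stmt17comp_pow hq0,
      stmt17key1 hk _ _ (stmt17twist hq c x hx s)]
    funext i
    rw [← pow_mul, ← pow_mul, ← pow_mul]
    congr 1
    ring

lemma stmt17fixpow {E : Type*} [Field E] {q n : ℕ} (y : E) (hy : y ^ q ^ n = y) (m : ℕ) :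
    y ^ q ^ (n * m) = y := by
  induction m with
  | zero => simp
  | succ m ih =>
    rw [Nat.mul_succ, pow_add, pow_mul, ih, hy]

lemma stmt17period {E : Type*} [Field E] {q n k : ℕ} (hq0 : q ≠ 0) (c : Fin k → E)
    (hc : ∀ i, c i ^ q ^ n = c i) (d : ℕ) :
    ((List.range (n * d)).map (fun t => (stmt17comp c).map (· ^ q ^ t))).prod
      = (((List.range n).map (fun t => (stmt17comp c).map (· ^ q ^ t))).prod) ^ d := by
  induction d with
  | zero => simp
  | succ d ih =>
    have hent : ∀ t (i j : Fin k),
        (stmt17comp c i j) ^ q ^ (n * d + t) = (stmt17comp c i j) ^ q ^ t := by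
      intro t i j
      have h1 : (stmt17comp c i j) ^ q ^ n = stmt17comp c i j := by
        simp only [stmt17comp, Matrix.of_apply]
        split_ifs <;> simp [hc, zero_pow, pow_ne_zero _ hq0, hq0]
      rw [pow_add, pow_mul, stmt17fixpow _ h1]
    have hM : ∀ t, (stmt17comp c).map (· ^ q ^ (n * d + t))
        = (stmt17comp c).map (· ^ q ^ t) := by
      intro t; funext i j; exact hent t i j
    rw [Nat.mul_succ, List.range_add, List.map_append, List.prod_append, ih, pow_succ]
    congr 1
    rw [List.map_map]
    refine congrArg List.prod (List.map_congr_left fun t _ => ?_)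
    simp only [Function.comp_apply]
    exact hM t

lemma stmt17span {E : Type*} [Field E] {q k : ℕ} (hq2 : 2 ≤ q) (hk : 0 < k)
    (S : Finset E) (hS : q ^ k ≤ S.card) (w : Fin k → E)
    (hw : ∀ x ∈ S, ∑ i : Fin k, w i * x ^ q ^ (i : ℕ) = 0) : ∀ i, w i = 0 := by
  classical
  set P : E[X] := ∑ i : Fin k, C (w i) * X ^ q ^ (i : ℕ) with hPdef
  have hP : P = 0 := by
    by_contra hP0
    have hsub : S ⊆ P.roots.toFinset := by
      intro x hx
      rw [Multiset.mem_toFinset, mem_roots hP0]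
      simp only [IsRoot, hPdef, eval_finset_sum, eval_mul, eval_C, eval_pow, eval_X]
      exact hw x hx
    have hdeg : P.natDegree ≤ q ^ (k - 1) := by
      apply Polynomial.natDegree_sum_le_of_forall_le
      intro i _
      refine le_trans (natDegree_C_mul_le _ _) ?_
      rw [natDegree_X_pow]
      exact Nat.pow_le_pow_right (by omega) (by omega)
    have h1 : S.card ≤ P.roots.toFinset.card := Finset.card_le_card hsub
    have h2 : P.roots.toFinset.card ≤ Multiset.card P.roots := Multiset.toFinset_card_le _
    have h3 : Multiset.card P.roots ≤ P.natDegree := Polynomial.card_roots' P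
    have h4 : q ^ (k - 1) < q ^ k := Nat.pow_lt_pow_right (by omega) (by omega)
    omega
  intro i
  have := congrArg (fun Q : E[X] => Q.coeff (q ^ (i : ℕ))) hP
  simp only [hPdef, finset_sum_coeff, coeff_C_mul, coeff_X_pow, coeff_zero] at this
  rw [← this]
  rw [Finset.sum_congr rfl (fun j _ => ?_)]
  · rw [Finset.sum_ite_eq' Finset.univ i w, if_pos (Finset.mem_univ i)]
  · congr 1
    rcases eq_or_ne j i with h | h
    · simp [h]
    · have : q ^ (i : ℕ) ≠ q ^ (j : ℕ) := by
        intro hc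
        exact h (Fin.ext (Nat.pow_right_injective hq2 hc.symm))
      simp [this, h]


lemma stmt17char {E : Type*} [Field E] [Fintype E] {p e m q : ℕ} (hp : p.Prime)
    (hq : p ^ e = q) (he : 0 < e) (hm : 0 < m) (hcard : Fintype.card E = q ^ m) :
    CharP E p := by
  obtain ⟨p', hp'inst⟩ := CharP.exists E
  haveI := hp'inst
  obtain ⟨n', hp', hcard'⟩ := FiniteField.card E p'
  have hpp : p' = p := by
    have h1 : p' ^ (n' : ℕ) = p ^ (e * m) := by
      rw [← hcard', hcard, ← hq, ← pow_mul]
    have h2 : p' ∣ p ^ (e * m) := h1 ▸ dvd_pow_self p' (by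
      exact_mod_cast n'.ne_zero)
    exact (Nat.prime_dvd_prime_iff_eq hp' hp).mp (hp'.dvd_of_dvd_pow h2)
  exact hpp ▸ hp'inst

lemma stmt17fixed {M Ω : Type*} [Field M] [Fintype M] [Field Ω] (ι : M →+* Ω)
    {s : ℕ} (hs : 1 < s) (hcard : Fintype.card M = s) (z : Ω) (hz : z ^ s = z) :
    ∃ x : M, ι x = z := by
  classical
  set H : Polynomial Ω := X ^ s - X with hH
  have hdeg : H.natDegree = s := by
    rw [hH, natDegree_sub_eq_left_of_natDegree_lt (by simp [natDegree_X_pow]; omega),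
      natDegree_X_pow]
  have hH0 : H ≠ 0 := by
    intro h; rw [h, natDegree_zero] at hdeg; omega
  have hT : (Finset.univ.image ι) ⊆ H.roots.toFinset := by
    intro y hy
    obtain ⟨x, -, rfl⟩ := Finset.mem_image.mp hy
    rw [Multiset.mem_toFinset, mem_roots hH0]
    have : x ^ s = x := by rw [← hcard]; exact FiniteField.pow_card x
    simp [hH, IsRoot, ← map_pow, this]
  have hc1 : (Finset.univ.image ι).card = s := by
    rw [Finset.card_image_of_injective _ ι.injective, Finset.card_univ, hcard]
  have hc2 : H.roots.toFinset.card ≤ s := by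
    refine le_trans (Multiset.toFinset_card_le _) (le_trans (Polynomial.card_roots' H) ?_)
    rw [hdeg]
  have heq := Finset.eq_of_subset_of_card_le hT (by omega)
  have hzmem : z ∈ H.roots.toFinset := by
    rw [Multiset.mem_toFinset, mem_roots hH0]
    simp [hH, IsRoot, hz]
  rw [← heq] at hzmem
  obtain ⟨x, -, hx⟩ := Finset.mem_image.mp hzmem
  exact ⟨x, hx⟩

lemma stmt17deriv {M : Type*} [Field M] {q k : ℕ} (hk : 0 < k) (hqz : (q : M) = 0)
    (b : Fin k → M) :
    Polynomial.derivative ((∑ i : Fin k, C (b i) * X ^ q ^ (i : ℕ)) - X ^ q ^ k)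
      = C (b ⟨0, hk⟩) := by
  obtain ⟨k', rfl⟩ : ∃ k', k = k' + 1 := ⟨k - 1, by omega⟩
  have hcast : ∀ i : ℕ, 0 < i → ((q ^ i : ℕ) : M) = 0 := by
    intro i hi
    rw [Nat.cast_pow, hqz, zero_pow (by omega)]
  rw [derivative_sub, derivative_X_pow, hcast (k' + 1) (by omega), map_sum]
  rw [Fin.sum_univ_succ]
  have h0 : Polynomial.derivative (C (b 0) * X ^ q ^ ((0 : Fin (k' + 1)) : ℕ))
      = C (b 0) := by
    simp [derivative_C_mul, derivative_X_pow]
  have hrest : ∀ i : Fin k', Polynomial.derivative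
      (C (b i.succ) * X ^ q ^ ((i.succ : Fin (k' + 1)) : ℕ)) = 0 := by
    intro i
    rw [derivative_C_mul, derivative_X_pow, hcast _ (by simp), map_zero, zero_mul, mul_zero]
  rw [h0, Finset.sum_congr rfl fun i _ => hrest i]
  have : (⟨0, hk⟩ : Fin (k' + 1)) = 0 := rfl
  simp [this]

lemma stmt17comp_hom {E F : Type*} [Field E] [Field F] (φ : E →+* F) {k : ℕ}
    (c : Fin k → E) : φ.mapMatrix (stmt17comp c) = stmt17comp (fun i => φ (c i)) := by
  funext i j
  simp only [RingHom.mapMatrix_apply, Matrix.map_apply, stmt17comp, Matrix.of_apply]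
  split_ifs <;> simp

lemma stmt17mapB {E F : Type*} [Field E] [Field F] (φ : E →+* F) {q k : ℕ}
    (c : Fin k → E) (s : ℕ) :
    φ.mapMatrix (((List.range s).map (fun t => (stmt17comp c).map (· ^ q ^ t))).prod)
      = ((List.range s).map
          (fun t => (stmt17comp (fun i => φ (c i))).map (· ^ q ^ t))).prod := by
  rw [map_list_prod, List.map_map]
  refine congrArg List.prod (List.map_congr_left fun t _ => ?_)
  simp only [Function.comp_apply]
  rw [show (φ.mapMatrix ((stmt17comp c).map (· ^ q ^ t)) : Matrix (Fin k) (Fin k) F)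
      = (φ.mapMatrix (stmt17comp c)).map (· ^ q ^ t) from ?_, stmt17comp_hom]
  funext i j
  simp [RingHom.mapMatrix_apply, Matrix.map_apply, map_pow]

universe v

/-- Let `f(x) = a_0 x + ... + a_{k-1} x^{q^{k-1}} - x^{q^k}` over `F_{q^n}`
with `a_0 ≠ 0`, `A` its companion matrix and `B = A·A^q·...·A^{q^{n-1}}`. The splitting
field of `f` is `F_{q^{nm}}` where `m = orderOf B`: an extension `F_{q^{nd}}` of `F_{q^n}`
contains all `q^k` roots of `f` iff `m ∣ d`. -/
theorem stmt17 (q n k : ℕ) (hq : IsPrimePow q) (hn : 0 < n) (hk : 0 < k)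
    (L : Type*) [Field L] [Fintype L] (hL : Fintype.card L = q ^ n)
    (a : Fin k → L) (ha0 : a ⟨0, hk⟩ ≠ 0)
    (A : Matrix (Fin k) (Fin k) L)
    (hA : A = Matrix.of fun i j : Fin k =>
      if (i : ℕ) = (j : ℕ) + 1 then 1 else if (j : ℕ) = k - 1 then a i else 0)
    (B : Matrix (Fin k) (Fin k) L)
    (hB : B = ((List.range n).map (fun i => A.map (fun y => y ^ q ^ i))).prod) :
    ∀ (M : Type v) [Field M] [Fintype M] (g : L →+* M) (d : ℕ), 0 < d →
      Fintype.card M = q ^ (n * d) →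
      (Set.ncard {x : M | (∑ i : Fin k, g (a i) * x ^ q ^ (i : ℕ)) - x ^ q ^ k = 0} = q ^ k
        ↔ orderOf B ∣ d) := by
  intro M _ _ g d hd hM
  classical
  obtain ⟨p, e, hpP, he, hpe⟩ := hq
  have hpp : p.Prime := hpP.nat_prime
  have hq2 : 2 ≤ q := by
    calc 2 ≤ p := hpp.two_le
    _ ≤ p ^ e := Nat.le_self_pow (by omega) p
    _ = q := hpe
  have hq0 : q ≠ 0 := by omega
  haveI : Fact p.Prime := ⟨hpp⟩
  have hndpos : 0 < n * d := Nat.mul_pos hn hd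
  haveI hchM : CharP M p := stmt17char hpp hpe he hndpos hM
  set b : Fin k → M := fun i => g (a i) with hbdef
  have hbfix : ∀ i, b i ^ q ^ n = b i := by
    intro i
    show g (a i) ^ q ^ n = g (a i)
    rw [← map_pow]
    congr 1
    rw [← hL]
    exact FiniteField.pow_card _
  have hAcomp : A = stmt17comp a := hA
  have hAg : g.mapMatrix A = stmt17comp b := by
    rw [hAcomp, stmt17comp_hom]
  have hBg : g.mapMatrix B
      = ((List.range n).map (fun t => (stmt17comp b).map (· ^ q ^ t))).prod := by
    rw [hB, map_list_prod, List.map_map]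
    refine congrArg List.prod (List.map_congr_left fun t _ => ?_)
    simp only [Function.comp_apply]
    have h : (g.mapMatrix (A.map (fun y => y ^ q ^ t)) : Matrix (Fin k) (Fin k) M)
        = (g.mapMatrix A).map (· ^ q ^ t) := by
      funext i j
      simp [RingHom.mapMatrix_apply, Matrix.map_apply, map_pow]
    rw [h, hAg]
  have hinj : Function.Injective
      (g.mapMatrix : Matrix (Fin k) (Fin k) L →+* Matrix (Fin k) (Fin k) M) := by
    intro X Y h
    funext i j
    exact g.injective (congrFun (congrFun (congrArg (fun m => m) h) i) j)
  have hroot : ∀ x : M, ((∑ i : Fin k, g (a i) * x ^ q ^ (i : ℕ)) - x ^ q ^ k = 0)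
      ↔ x ^ q ^ k = ∑ i : Fin k, b i * x ^ q ^ (i : ℕ) := by
    intro x
    rw [sub_eq_zero, eq_comm]
  set Bb := ((List.range n).map (fun t => (stmt17comp b).map (· ^ q ^ t))).prod with hBb
  have hvec : ∀ x : M, x ^ q ^ k = ∑ i : Fin k, b i * x ^ q ^ (i : ℕ) →
      Matrix.vecMul (fun i : Fin k => x ^ q ^ (i : ℕ)) (Bb ^ d)
        = fun i : Fin k => x ^ q ^ (i : ℕ) := by
    intro x hx
    have h1 := stmt17key4 (E := M) hpe hq0 hk b x hx (n * d)
    rw [stmt17period hq0 b hbfix d] at h1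
    rw [← hBb] at h1
    rw [h1]
    funext i
    have hfx : x ^ q ^ (n * d) = x := by
      rw [← hM]; exact FiniteField.pow_card x
    rw [hfx]
  constructor
  · -- forward
    intro hcard
    rw [orderOf_dvd_iff_pow_eq_one]
    apply hinj
    rw [map_pow, _root_.map_one, hBg]
    set Rset := {x : M | (∑ i : Fin k, g (a i) * x ^ q ^ (i : ℕ)) - x ^ q ^ k = 0}
      with hRset
    have hRfin : Rset.Finite := Set.toFinite Rset
    have hScard : hRfin.toFinset.card = q ^ k := by
      rw [← Set.ncard_eq_toFinset_card Rset hRfin]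
      exact hcard
    have hcols : ∀ j i : Fin k,
        (Bb ^ d) i j - (1 : Matrix (Fin k) (Fin k) M) i j = 0 := by
      intro j
      apply stmt17span hq2 hk hRfin.toFinset (le_of_eq hScard.symm)
      intro x hxS
      have hxR : x ∈ Rset := (Set.Finite.mem_toFinset hRfin).mp hxS
      have hx := (hroot x).mp hxR
      have h2 := congrFun (hvec x hx) j
      simp only [Matrix.vecMul, dotProduct] at h2
      have h3 : ∑ i : Fin k, x ^ q ^ (i : ℕ) * (1 : Matrix (Fin k) (Fin k) M) i j
          = x ^ q ^ (j : ℕ) := by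
        simp [Matrix.one_apply]
      calc ∑ i : Fin k, ((Bb ^ d) i j - (1 : Matrix (Fin k) (Fin k) M) i j)
            * x ^ q ^ (i : ℕ)
          = (∑ i : Fin k, x ^ q ^ (i : ℕ) * (Bb ^ d) i j)
            - ∑ i : Fin k, x ^ q ^ (i : ℕ) * (1 : Matrix (Fin k) (Fin k) M) i j := by
            rw [← Finset.sum_sub_distrib]
            exact Finset.sum_congr rfl fun i _ => by ring
        _ = 0 := by rw [h2, h3, sub_self]
    funext i j
    exact sub_eq_zero.mp (hcols j i)
  · -- backward
    intro hdvd
    have hBd : B ^ d = 1 := orderOf_dvd_iff_pow_eq_one.mp hdvd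
    set Ω := AlgebraicClosure M with hΩ
    set ι : M →+* Ω := algebraMap M Ω with hι
    haveI : CharP Ω p := charP_of_injective_ringHom ι.injective p
    set c : Fin k → Ω := fun i => ι (b i) with hc
    have hcfix : ∀ i, c i ^ q ^ n = c i := by
      intro i
      show ι (b i) ^ q ^ n = ι (b i)
      rw [← map_pow, hbfix]
    set F : Polynomial M := (∑ i : Fin k, Polynomial.C (b i)
        * Polynomial.X ^ q ^ (i : ℕ)) - Polynomial.X ^ q ^ k with hF
    have hPdeg : (∑ i : Fin k, Polynomial.C (b i)
        * Polynomial.X ^ q ^ (i : ℕ)).natDegree < q ^ k := by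
      have h5 : (∑ i : Fin k, Polynomial.C (b i)
          * Polynomial.X ^ q ^ (i : ℕ)).natDegree ≤ q ^ (k - 1) := by
        apply Polynomial.natDegree_sum_le_of_forall_le
        intro i _
        refine le_trans (Polynomial.natDegree_C_mul_le _ _) ?_
        rw [Polynomial.natDegree_X_pow]
        exact Nat.pow_le_pow_right (by omega) (by have := i.isLt; omega)
      have h6 : q ^ (k - 1) < q ^ k := Nat.pow_lt_pow_right (by omega) (by omega)
      omega
    have hFdeg : F.natDegree = q ^ k := by
      rw [hF, Polynomial.natDegree_sub_eq_right_of_natDegree_lt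
        (by rw [Polynomial.natDegree_X_pow]; exact hPdeg), Polynomial.natDegree_X_pow]
    have hF0 : F ≠ 0 := by
      intro h
      rw [h, Polynomial.natDegree_zero] at hFdeg
      have : 0 < q ^ k := Nat.pow_pos (by omega)
      omega
    have hqzM : (q : M) = 0 := by
      rw [← hpe, Nat.cast_pow, show ((p : ℕ) : M) = 0 from CharP.cast_eq_zero M p,
        zero_pow (by omega)]
    have hder : Polynomial.derivative F = Polynomial.C (b ⟨0, hk⟩) :=
      stmt17deriv hk hqzM b
    have hb0 : b ⟨0, hk⟩ ≠ 0 := by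
      intro h
      exact ha0 (g.injective (by rw [show g (a ⟨0, hk⟩) = b ⟨0, hk⟩ from rfl, h, map_zero]))
    have hsep : F.Separable := by
      rw [Polynomial.Separable, hder]
      exact ⟨0, Polynomial.C (b ⟨0, hk⟩)⁻¹, by
        rw [zero_mul, zero_add, ← Polynomial.C_mul, inv_mul_cancel₀ hb0, Polynomial.C_1]⟩
    set Fm := F.map ι with hFm
    have hFm0 : Fm ≠ 0 := (Polynomial.map_ne_zero_iff ι.injective).mpr hF0
    have hFmdeg : Fm.natDegree = q ^ k := by
      rw [hFm, Polynomial.natDegree_map]; exact hFdeg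
    have hFmsep : Fm.Separable := hsep.map
    have hsplits : Fm.Splits :=
      IsAlgClosed.splits Fm
    have hrc : Multiset.card Fm.roots = q ^ k := by
      rw [← hFmdeg]
      exact Polynomial.splits_iff_card_roots.mp hsplits
    have hnodup := Polynomial.nodup_roots hFmsep
    have hFev : ∀ x : M, F.eval x
        = (∑ i : Fin k, b i * x ^ q ^ (i : ℕ)) - x ^ q ^ k := by
      intro x
      simp [hF, Polynomial.eval_finset_sum]
    have hFmev : ∀ z : Ω, Fm.eval z
        = (∑ i : Fin k, c i * z ^ q ^ (i : ℕ)) - z ^ q ^ k := by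
      intro z
      rw [hFm, hF]
      simp [hc, Polynomial.eval_finset_sum, Polynomial.eval_map, Polynomial.eval₂_sub,
        Polynomial.map_sub, Polynomial.map_sum, Polynomial.map_pow]
    have hfix : ∀ z : Ω, Fm.eval z = 0 → z ^ q ^ (n * d) = z := by
      intro z hz
      have hzroot : z ^ q ^ k = ∑ i : Fin k, c i * z ^ q ^ (i : ℕ) := by
        rw [hFmev z, sub_eq_zero] at hz
        exact hz.symm
      have h1 := stmt17key4 (E := Ω) hpe hq0 hk c z hzroot (n * d)
      rw [stmt17period hq0 c hcfix d] at h1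
      have h2 : (((List.range n).map
          (fun t => (stmt17comp c).map (· ^ q ^ t))).prod) ^ d = 1 := by
        have h3 := stmt17mapB ι (q := q) b n
        have h4 : (fun i => ι (b i)) = c := rfl
        rw [h4] at h3
        rw [← h3, ← hBb, ← hBg, ← map_pow, ← map_pow, hBd, _root_.map_one, _root_.map_one]
      rw [h2, Matrix.vecMul_one] at h1
      have h5 := congrFun h1 ⟨0, hk⟩
      simpa using h5.symm
    have h1lt : 1 < q ^ (n * d) := Nat.one_lt_pow (by omega) (by omega)
    have himg : ι '' {x : M | (∑ i : Fin k, g (a i) * x ^ q ^ (i : ℕ)) - x ^ q ^ k = 0}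
        = {z : Ω | Fm.eval z = 0} := by
      ext z
      constructor
      · rintro ⟨x, hx, rfl⟩
        have hx0 : F.eval x = 0 := by
          rw [hFev]
          exact hx
        show Fm.eval (ι x) = 0
        rw [hFm, Polynomial.eval_map, Polynomial.eval₂_at_apply, hx0, map_zero]
      · intro hz
        obtain ⟨x, rfl⟩ := stmt17fixed ι h1lt hM z (hfix z hz)
        refine ⟨x, ?_, rfl⟩
        have h6 : ι (F.eval x) = 0 := by
          rw [← Polynomial.eval₂_at_apply, ← Polynomial.eval_map, ← hFm]
          exact hz
        have hx0 : F.eval x = 0 := by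
          apply ι.injective
          rw [h6, map_zero]
        rw [hFev] at hx0
        exact hx0
    have hset : {z : Ω | Fm.eval z = 0} = (Fm.roots.toFinset : Set Ω) := by
      ext z
      simp [Multiset.mem_toFinset, Polynomial.mem_roots hFm0, Polynomial.IsRoot]
    calc Set.ncard {x : M | (∑ i : Fin k, g (a i) * x ^ q ^ (i : ℕ)) - x ^ q ^ k = 0}
        = Set.ncard (ι '' {x : M |
            (∑ i : Fin k, g (a i) * x ^ q ^ (i : ℕ)) - x ^ q ^ k = 0}) :=
          (Set.ncard_image_of_injective _ ι.injective).symm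
      _ = Set.ncard ((Fm.roots.toFinset : Set Ω)) := by rw [himg, hset]
      _ = Fm.roots.toFinset.card := Set.ncard_coe_finset _
      _ = Multiset.card Fm.roots := Multiset.toFinset_card_of_nodup hnodup
      _ = q ^ k := hrc
end

section
/- Let f(x) = a_0x + a_1x^q + a_2x^{q^2} - x^{q^3} over F_{q^6} with a_0 ≠ 0. Then f has exactly q^3 roots in F_{q^6} if and only if N_{q^6/q}(a_0) = 1, a_0^{q^3+q+1} + a_2^{q^3}a_1^{q^2}a_0^{q+1} - a_2^q a_1 = a_0^q, a_2^{q+1} = -a_0^{q^3+q^2+q+1}a_1^{q^4} - a_1^q, and a_1^{q+1} = a_2 a_0^q + a_0^{q^2+q+1}a_2^{q^3}. -/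
open Polynomial Finset

section RootCount

variable {L : Type*} [Field L] [Fintype L]

private lemma stmt19_monic_dvd_facts {g : L[X]} (hm : g.Monic)
    (hd : g ∣ X ^ (Fintype.card L) - X) :
    g.roots.Nodup ∧ Multiset.card g.roots = g.natDegree ∧
      g = (g.roots.map fun a => X - C a).prod := by
  classical
  have hcard : 1 < Fintype.card L := Fintype.one_lt_card
  haveI : CharP L (ringChar L) := ringChar.charP L
  obtain ⟨m, hp, hn⟩ := FiniteField.card L (ringChar L)
  have hXmonic : (X ^ (Fintype.card L) - X : L[X]).Monic :=
    monic_X_pow_sub (by rw [degree_X]; exact_mod_cast hcard)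
  have hXne : (X ^ (Fintype.card L) - X : L[X]) ≠ 0 := hXmonic.ne_zero
  have hXsep : (X ^ (Fintype.card L) - X : L[X]).Separable := by
    refine galois_poly_separable (ringChar L) _ ?_
    rw [hn]; exact dvd_pow_self _ m.2.ne'
  have hXsplits : Splits (X ^ (Fintype.card L) - X : L[X]) := by
    rw [splits_iff_card_roots, FiniteField.roots_X_pow_card_sub_X,
      FiniteField.X_pow_card_sub_X_natDegree_eq L hcard]
    simp
  have hgsplits : Splits g :=
    hXsplits.of_dvd hXne hd
  have hgsep : g.Separable := hXsep.of_dvd hd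
  exact ⟨Polynomial.nodup_roots hgsep, splits_iff_card_roots.mp hgsplits,
    hgsplits.eq_prod_roots_of_monic hm⟩

private lemma stmt19_ncard_of_dvd {g : L[X]} (hm : g.Monic)
    (hd : g ∣ X ^ (Fintype.card L) - X) :
    {x : L | g.eval x = 0}.ncard = g.natDegree := by
  classical
  obtain ⟨hnodup, hcard, -⟩ := stmt19_monic_dvd_facts hm hd
  have hset : {x : L | g.eval x = 0} = ↑g.roots.toFinset := by
    ext x
    simp [Polynomial.mem_roots, hm.ne_zero, IsRoot.def]
  rw [hset, Set.ncard_coe_finset, Multiset.toFinset_card_of_nodup hnodup, hcard]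

private lemma stmt19_univ_prod :
    (X ^ (Fintype.card L) - X : L[X]) = ∏ a : L, (X - C a) := by
  classical
  have hcard : 1 < Fintype.card L := Fintype.one_lt_card
  have hXmonic : (X ^ (Fintype.card L) - X : L[X]).Monic :=
    monic_X_pow_sub (by rw [degree_X]; exact_mod_cast hcard)
  obtain ⟨-, -, h⟩ := stmt19_monic_dvd_facts hXmonic dvd_rfl
  rw [h, FiniteField.roots_X_pow_card_sub_X, Finset.prod_eq_multiset_prod]

private lemma stmt19_dvd_of_ncard {g : L[X]} (hm : g.Monic)
    (hcount : g.natDegree ≤ {x : L | g.eval x = 0}.ncard) :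
    g ∣ X ^ (Fintype.card L) - X := by
  classical
  have hset : {x : L | g.eval x = 0} = ↑g.roots.toFinset := by
    ext x
    simp [Polynomial.mem_roots, hm.ne_zero, IsRoot.def]
  rw [hset, Set.ncard_coe_finset] at hcount
  set K := g.roots.toFinset with hK
  set u := ∏ k ∈ K, (X - C k) with hu
  have humonic : u.Monic := monic_prod_of_monic _ _ fun k _ => monic_X_sub_C k
  have hudeg : u.natDegree = K.card := by
    rw [hu, natDegree_prod _ _ fun k _ => X_sub_C_ne_zero k]
    simp
  have hudvd : u ∣ g := by
    refine dvd_trans ?_ (prod_multiset_X_sub_C_dvd g)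
    rw [hu, Finset.prod_eq_multiset_prod]
    exact Multiset.prod_dvd_prod_of_le
      (Multiset.map_le_map (by simpa [hK] using g.roots.dedup_le))
  obtain ⟨v, hv⟩ := hudvd
  have hvne : v ≠ 0 := by
    rintro rfl
    exact hm.ne_zero (by simpa using hv)
  have hdegs : g.natDegree = u.natDegree + v.natDegree := by
    rw [hv, natDegree_mul humonic.ne_zero hvne]
  have hveq : v = 1 := by
    have hvmonic : v.Monic := humonic.of_mul_monic_left (hv ▸ hm)
    have : v.natDegree = 0 := by omega
    exact hvmonic.natDegree_eq_zero.mp this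
  have hgu : g = u := by rw [hv, hveq, mul_one]
  rw [hgu, stmt19_univ_prod (L := L), hu]
  exact Finset.prod_dvd_prod_of_subset _ _ _ (Finset.subset_univ K)

end RootCount

section Division

variable {L : Type*} [Field L] {p k q : ℕ} [Fact p.Prime] [CharP L p]

private lemma stmt19_gpow (hq : q = p ^ k) (a₀ a₁ a₂ : L) (j : ℕ) :
    (X ^ q ^ 3 - (C a₂ * X ^ q ^ 2 + C a₁ * X ^ q + C a₀ * X) : L[X]) ^ q ^ j
      = X ^ (q ^ 3 * q ^ j) - (C (a₂ ^ q ^ j) * X ^ (q ^ 2 * q ^ j)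
          + C (a₁ ^ q ^ j) * X ^ (q * q ^ j) + C (a₀ ^ q ^ j) * X ^ (1 * q ^ j)) := by
  have hqj : q ^ j = p ^ (k * j) := by rw [hq, pow_mul]
  rw [hqj, sub_pow_char_pow, add_pow_char_pow, add_pow_char_pow]
  simp only [mul_pow, ← map_pow, ← pow_mul, one_mul]

private lemma stmt19_div_identity (hq : q = p ^ k) (a₀ a₁ a₂ : L) :
    (X ^ q ^ 6 - X : L[X]) =
      ((X ^ q ^ 3 - (C a₂ * X ^ q ^ 2 + C a₁ * X ^ q + C a₀ * X)) ^ q ^ 3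
        + C (a₂ ^ q ^ 3) *
            (X ^ q ^ 3 - (C a₂ * X ^ q ^ 2 + C a₁ * X ^ q + C a₀ * X)) ^ q ^ 2
        + C (a₁ ^ q ^ 3 + a₂ ^ q ^ 3 * a₂ ^ q ^ 2) *
            (X ^ q ^ 3 - (C a₂ * X ^ q ^ 2 + C a₁ * X ^ q + C a₀ * X)) ^ q ^ 1
        + C (a₀ ^ q ^ 3 + a₂ ^ q ^ 3 * a₁ ^ q ^ 2
              + (a₁ ^ q ^ 3 + a₂ ^ q ^ 3 * a₂ ^ q ^ 2) * a₂ ^ q) *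
            (X ^ q ^ 3 - (C a₂ * X ^ q ^ 2 + C a₁ * X ^ q + C a₀ * X)))
      + (C (a₂ ^ q ^ 3 * a₀ ^ q ^ 2
              + (a₁ ^ q ^ 3 + a₂ ^ q ^ 3 * a₂ ^ q ^ 2) * a₁ ^ q
              + (a₀ ^ q ^ 3 + a₂ ^ q ^ 3 * a₁ ^ q ^ 2
                  + (a₁ ^ q ^ 3 + a₂ ^ q ^ 3 * a₂ ^ q ^ 2) * a₂ ^ q) * a₂) * X ^ q ^ 2
          + C ((a₁ ^ q ^ 3 + a₂ ^ q ^ 3 * a₂ ^ q ^ 2) * a₀ ^ q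
              + (a₀ ^ q ^ 3 + a₂ ^ q ^ 3 * a₁ ^ q ^ 2
                  + (a₁ ^ q ^ 3 + a₂ ^ q ^ 3 * a₂ ^ q ^ 2) * a₂ ^ q) * a₁) * X ^ q
          + C ((a₀ ^ q ^ 3 + a₂ ^ q ^ 3 * a₁ ^ q ^ 2
                  + (a₁ ^ q ^ 3 + a₂ ^ q ^ 3 * a₂ ^ q ^ 2) * a₂ ^ q) * a₀ - 1) * X) := by
  rw [stmt19_gpow hq a₀ a₁ a₂ 3, stmt19_gpow hq a₀ a₁ a₂ 2, stmt19_gpow hq a₀ a₁ a₂ 1]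
  simp only [map_add, map_mul, map_pow, map_sub, map_one]
  ring

end Division

section DvdIff

variable {L : Type*} [Field L] {p k q : ℕ} [Fact p.Prime] [CharP L p]

private lemma stmt19_lowdeg (hq2 : 2 ≤ q) (a₀ a₁ a₂ : L) :
    (C a₂ * X ^ q ^ 2 + C a₁ * X ^ q + C a₀ * X : L[X]).degree < ((q ^ 3 : ℕ) : WithBot ℕ) := by
  have h1 : ((q ^ 2 : ℕ) : WithBot ℕ) < ((q ^ 3 : ℕ) : WithBot ℕ) := by
    exact_mod_cast Nat.pow_lt_pow_right hq2 (by norm_num)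
  refine lt_of_le_of_lt ?_ h1
  compute_degree
  have hb : ((q : WithBot ℕ)) ^ 2 = ((q ^ 2 : ℕ) : WithBot ℕ) := by push_cast; ring
  have hq' : ((q : ℕ) : WithBot ℕ) ≤ ((q ^ 2 : ℕ) : WithBot ℕ) := by
    exact_mod_cast Nat.le_self_pow two_ne_zero q
  have h1' : (1 : WithBot ℕ) ≤ ((q ^ 2 : ℕ) : WithBot ℕ) := by
    have : 1 ≤ q ^ 2 := Nat.one_le_pow 2 q (by omega)
    exact_mod_cast this
  exact max_le (max_le (le_of_eq hb) hq') h1' 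

private lemma stmt19_gmonic (hq2 : 2 ≤ q) (a₀ a₁ a₂ : L) :
    (X ^ q ^ 3 - (C a₂ * X ^ q ^ 2 + C a₁ * X ^ q + C a₀ * X) : L[X]).Monic :=
  monic_X_pow_sub (stmt19_lowdeg hq2 a₀ a₁ a₂)

private lemma stmt19_gdeg (hq2 : 2 ≤ q) (a₀ a₁ a₂ : L) :
    (X ^ q ^ 3 - (C a₂ * X ^ q ^ 2 + C a₁ * X ^ q + C a₀ * X) : L[X]).natDegree = q ^ 3 := by
  have h := degree_sub_eq_left_of_degree_lt
    (show degree (C a₂ * X ^ q ^ 2 + C a₁ * X ^ q + C a₀ * X : L[X])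
        < degree (X ^ q ^ 3 : L[X]) by
      rw [degree_X_pow]; exact stmt19_lowdeg hq2 a₀ a₁ a₂)
  rw [degree_X_pow] at h
  exact natDegree_eq_of_degree_eq_some h

end DvdIff

section DvdIff2

variable {L : Type*} [Field L] {p k q : ℕ} [Fact p.Prime] [CharP L p]

private lemma stmt19_dvd_iff (hq : q = p ^ k) (hq2 : 2 ≤ q) (a₀ a₁ a₂ b c r0 r1 r2 : L)
    (hb : b = a₁ ^ q ^ 3 + a₂ ^ q ^ 3 * a₂ ^ q ^ 2)
    (hc : c = a₀ ^ q ^ 3 + a₂ ^ q ^ 3 * a₁ ^ q ^ 2 + b * a₂ ^ q)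
    (hr2 : r2 = a₂ ^ q ^ 3 * a₀ ^ q ^ 2 + b * a₁ ^ q + c * a₂)
    (hr1 : r1 = b * a₀ ^ q + c * a₁)
    (hr0 : r0 = c * a₀ - 1) :
    ((X ^ q ^ 3 - (C a₂ * X ^ q ^ 2 + C a₁ * X ^ q + C a₀ * X) : L[X]) ∣ X ^ q ^ 6 - X)
      ↔ (r0 = 0 ∧ r1 = 0 ∧ r2 = 0) := by
  subst hb hc hr2 hr1 hr0
  have hid := stmt19_div_identity (k := k) hq a₀ a₁ a₂
  have hmain : (X ^ q ^ 3 - (C a₂ * X ^ q ^ 2 + C a₁ * X ^ q + C a₀ * X) : L[X]) ∣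
      ((X ^ q ^ 3 - (C a₂ * X ^ q ^ 2 + C a₁ * X ^ q + C a₀ * X)) ^ q ^ 3
        + C (a₂ ^ q ^ 3) *
            (X ^ q ^ 3 - (C a₂ * X ^ q ^ 2 + C a₁ * X ^ q + C a₀ * X)) ^ q ^ 2
        + C (a₁ ^ q ^ 3 + a₂ ^ q ^ 3 * a₂ ^ q ^ 2) *
            (X ^ q ^ 3 - (C a₂ * X ^ q ^ 2 + C a₁ * X ^ q + C a₀ * X)) ^ q ^ 1
        + C (a₀ ^ q ^ 3 + a₂ ^ q ^ 3 * a₁ ^ q ^ 2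
              + (a₁ ^ q ^ 3 + a₂ ^ q ^ 3 * a₂ ^ q ^ 2) * a₂ ^ q) *
            (X ^ q ^ 3 - (C a₂ * X ^ q ^ 2 + C a₁ * X ^ q + C a₀ * X))) := by
    have hne : ∀ j : ℕ, q ^ j ≠ 0 := fun j => pow_ne_zero j (by omega)
    exact dvd_add (dvd_add (dvd_add (dvd_pow_self _ (hne 3))
      ((dvd_pow_self _ (hne 2)).mul_left _)) ((dvd_pow_self _ (hne 1)).mul_left _))
      (dvd_mul_left _ _)
  have h4 : 4 ≤ q ^ 2 := by nlinarith
  have h8 : q < q ^ 2 := by nlinarith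
  constructor
  · intro hdvd
    have hR : (X ^ q ^ 3 - (C a₂ * X ^ q ^ 2 + C a₁ * X ^ q + C a₀ * X) : L[X]) ∣
        (C (a₂ ^ q ^ 3 * a₀ ^ q ^ 2
              + (a₁ ^ q ^ 3 + a₂ ^ q ^ 3 * a₂ ^ q ^ 2) * a₁ ^ q
              + (a₀ ^ q ^ 3 + a₂ ^ q ^ 3 * a₁ ^ q ^ 2
                  + (a₁ ^ q ^ 3 + a₂ ^ q ^ 3 * a₂ ^ q ^ 2) * a₂ ^ q) * a₂) * X ^ q ^ 2
          + C ((a₁ ^ q ^ 3 + a₂ ^ q ^ 3 * a₂ ^ q ^ 2) * a₀ ^ q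
              + (a₀ ^ q ^ 3 + a₂ ^ q ^ 3 * a₁ ^ q ^ 2
                  + (a₁ ^ q ^ 3 + a₂ ^ q ^ 3 * a₂ ^ q ^ 2) * a₂ ^ q) * a₁) * X ^ q
          + C ((a₀ ^ q ^ 3 + a₂ ^ q ^ 3 * a₁ ^ q ^ 2
                  + (a₁ ^ q ^ 3 + a₂ ^ q ^ 3 * a₂ ^ q ^ 2) * a₂ ^ q) * a₀ - 1) * X) := by
      have h2 : (C (a₂ ^ q ^ 3 * a₀ ^ q ^ 2
              + (a₁ ^ q ^ 3 + a₂ ^ q ^ 3 * a₂ ^ q ^ 2) * a₁ ^ q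
              + (a₀ ^ q ^ 3 + a₂ ^ q ^ 3 * a₁ ^ q ^ 2
                  + (a₁ ^ q ^ 3 + a₂ ^ q ^ 3 * a₂ ^ q ^ 2) * a₂ ^ q) * a₂) * X ^ q ^ 2
          + C ((a₁ ^ q ^ 3 + a₂ ^ q ^ 3 * a₂ ^ q ^ 2) * a₀ ^ q
              + (a₀ ^ q ^ 3 + a₂ ^ q ^ 3 * a₁ ^ q ^ 2
                  + (a₁ ^ q ^ 3 + a₂ ^ q ^ 3 * a₂ ^ q ^ 2) * a₂ ^ q) * a₁) * X ^ q
          + C ((a₀ ^ q ^ 3 + a₂ ^ q ^ 3 * a₁ ^ q ^ 2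
                  + (a₁ ^ q ^ 3 + a₂ ^ q ^ 3 * a₂ ^ q ^ 2) * a₂ ^ q) * a₀ - 1) * X : L[X])
          = (X ^ q ^ 6 - X) -
            ((X ^ q ^ 3 - (C a₂ * X ^ q ^ 2 + C a₁ * X ^ q + C a₀ * X)) ^ q ^ 3
              + C (a₂ ^ q ^ 3) *
                  (X ^ q ^ 3 - (C a₂ * X ^ q ^ 2 + C a₁ * X ^ q + C a₀ * X)) ^ q ^ 2
              + C (a₁ ^ q ^ 3 + a₂ ^ q ^ 3 * a₂ ^ q ^ 2) *
                  (X ^ q ^ 3 - (C a₂ * X ^ q ^ 2 + C a₁ * X ^ q + C a₀ * X)) ^ q ^ 1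
              + C (a₀ ^ q ^ 3 + a₂ ^ q ^ 3 * a₁ ^ q ^ 2
                    + (a₁ ^ q ^ 3 + a₂ ^ q ^ 3 * a₂ ^ q ^ 2) * a₂ ^ q) *
                  (X ^ q ^ 3 - (C a₂ * X ^ q ^ 2 + C a₁ * X ^ q + C a₀ * X))) := by
        rw [hid]; ring
      rw [h2]
      exact dvd_sub hdvd hmain
    have hR0 := eq_zero_of_dvd_of_degree_lt hR (by
      refine lt_of_lt_of_le (stmt19_lowdeg hq2 _ _ _) ?_
      rw [degree_eq_natDegree (stmt19_gmonic hq2 a₀ a₁ a₂).ne_zero,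
        stmt19_gdeg hq2 a₀ a₁ a₂])
    have ea : ¬ ((1:ℕ) = q) := by omega
    have eb : ¬ ((1:ℕ) = q ^ 2) := by omega
    have ec : ¬ (q = q ^ 2) := by omega
    have ed : ¬ (q ^ 2 = q) := by omega
    have ee : ¬ (q = 1) := by omega
    have ef : ¬ (q ^ 2 = 1) := by omega
    refine ⟨?_, ?_, ?_⟩
    · have h1 := congrArg (fun P => coeff P 1) hR0
      simpa only [coeff_add, coeff_C_mul, coeff_X_pow, coeff_X, coeff_zero, ea, eb, ec,
        ed, ee, ef, if_true, if_false, eq_self_iff_true, mul_one, mul_zero, add_zero,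
        zero_add] using h1
    · have h1 := congrArg (fun P => coeff P q) hR0
      simpa only [coeff_add, coeff_C_mul, coeff_X_pow, coeff_X, coeff_zero, ea, eb, ec,
        ed, ee, ef, if_true, if_false, eq_self_iff_true, mul_one, mul_zero, add_zero,
        zero_add] using h1
    · have h1 := congrArg (fun P => coeff P (q ^ 2)) hR0
      simpa only [coeff_add, coeff_C_mul, coeff_X_pow, coeff_X, coeff_zero, ea, eb, ec,
        ed, ee, ef, if_true, if_false, eq_self_iff_true, mul_one, mul_zero, add_zero,
        zero_add] using h1
  · rintro ⟨h0, h1, h2⟩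
    rw [h0, h1, h2] at hid
    simp only [map_zero, zero_mul, add_zero] at hid
    rw [hid]
    exact hmain

end DvdIff2
section Zfacts

variable {L : Type*} [Field L] [Fintype L] [DecidableEq L] {q : ℕ}

/-- facts about the `(q-1)`-th roots of unity -/
private lemma stmt19_Zfacts (hq2 : 2 ≤ q) (hL : Fintype.card L = q ^ 6) :
    (X ^ (q - 1) - 1 : L[X]).roots.toFinset.card = q - 1 ∧
      (∏ l ∈ (X ^ (q - 1) - 1 : L[X]).roots.toFinset, l) = (-1 : L) ^ q := by
  have hq1 : 1 ≤ q - 1 := by omega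
  have hmonic : (X ^ (q - 1) - 1 : L[X]).Monic := by
    apply monic_X_pow_sub
    rw [show ((1 : L[X])) = C 1 by simp, degree_C one_ne_zero]
    exact_mod_cast hq1
  have hs : (q - 1) * (q ^ 5 + q ^ 4 + q ^ 3 + q ^ 2 + q + 1) = q ^ 6 - 1 := by
    obtain ⟨m, rfl⟩ : ∃ m, q = m + 1 := ⟨q - 1, by omega⟩
    simp only [Nat.add_sub_cancel]
    symm
    apply Nat.sub_eq_of_eq_add
    ring
  have hdvd : (X ^ (q - 1) - 1 : L[X]) ∣ X ^ Fintype.card L - X := by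
    have d1 : (X ^ (q - 1) - 1 : L[X]) ∣ (X ^ (q ^ 6 - 1) - 1) := by
      have := sub_dvd_pow_sub_pow (X ^ (q - 1) : L[X]) 1
        (q ^ 5 + q ^ 4 + q ^ 3 + q ^ 2 + q + 1)
      rwa [one_pow, ← pow_mul, hs] at this
    have d2 : (X ^ (q ^ 6) - X : L[X]) = X * (X ^ (q ^ 6 - 1) - 1) := by
      rw [mul_sub, mul_one, ← pow_succ']
      congr 2
      have : 1 ≤ q ^ 6 := Nat.one_le_pow _ _ (by omega)
      omega
    rw [hL, d2]
    exact d1.mul_left X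
  obtain ⟨hnodup, hcard, hprod⟩ := stmt19_monic_dvd_facts hmonic hdvd
  have hdeg : (X ^ (q - 1) - 1 : L[X]).natDegree = q - 1 := by
    rw [show ((1 : L[X])) = C 1 by simp]
    exact natDegree_X_pow_sub_C
  have hfincard : (X ^ (q - 1) - 1 : L[X]).roots.toFinset.card = q - 1 := by
    rw [Multiset.toFinset_card_of_nodup hnodup, hcard, hdeg]
  refine ⟨hfincard, ?_⟩
  -- evaluate the factorization at 0
  have hval := congrArg (eval 0) hprod
  rw [eval_sub, eval_pow, eval_X, eval_one, zero_pow (by omega : q - 1 ≠ 0), zero_sub,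
    eval_multiset_prod] at hval
  have hroots_val : (X ^ (q - 1) - 1 : L[X]).roots = (X ^ (q - 1) - 1 : L[X]).roots.toFinset.val := by
    rw [Multiset.toFinset_val, Multiset.dedup_eq_self.mpr hnodup]
  rw [hroots_val] at hval
  have hval2 : (-1 : L) = ∏ l ∈ (X ^ (q - 1) - 1 : L[X]).roots.toFinset, (0 - l) := by
    rw [Finset.prod_eq_multiset_prod]
    simpa using hval
  simp only [zero_sub] at hval2
  rw [Finset.prod_congr rfl (fun l _ => (neg_one_mul l).symm), Finset.prod_mul_distrib,
    Finset.prod_const, hfincard] at hval2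
  have hinv : ((-1 : L) ^ (q - 1)) * ((-1 : L) ^ (q - 1)) = 1 := by
    rw [← pow_add]
    exact Even.neg_one_pow ⟨q - 1, by ring⟩
  have h2 : (-1 : L) ^ (q - 1) * (-1 : L) =
      ∏ l ∈ (X ^ (q - 1) - 1 : L[X]).roots.toFinset, l := by
    linear_combination ((-1 : L) ^ (q - 1)) * hval2
      + (∏ l ∈ (X ^ (q - 1) - 1 : L[X]).roots.toFinset, l) * hinv
  have hq' : (-1 : L) ^ q = (-1 : L) ^ (q - 1) * (-1) := by
    conv_lhs => rw [show q = (q - 1) + 1 by omega]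
    rw [pow_succ]
  rw [hq']
  exact h2.symm

end Zfacts

section Norm

variable {L : Type*} [Field L] [Fintype L] [DecidableEq L] {p k q : ℕ}
  [Fact p.Prime] [CharP L p]

private lemma stmt19_norm (hq : q = p ^ k) (hq2 : 2 ≤ q) (hL : Fintype.card L = q ^ 6)
    (a₀ a₁ a₂ : L)
    (hdvd : (X ^ q ^ 3 - (C a₂ * X ^ q ^ 2 + C a₁ * X ^ q + C a₀ * X) : L[X]) ∣
      X ^ q ^ 6 - X) :
    a₀ ^ (q ^ 5 + q ^ 4 + q ^ 3 + q ^ 2 + q + 1) = 1 := by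
  have hq0 : q ≠ 0 := by omega
  have hq10 : q - 1 ≠ 0 := by omega
  have h8 : 2 ^ 3 ≤ q ^ 3 := Nat.pow_le_pow_left hq2 3
  have h4 : 2 ^ 2 ≤ q ^ 2 := Nat.pow_le_pow_left hq2 2
  have hs : (q - 1) * (q ^ 5 + q ^ 4 + q ^ 3 + q ^ 2 + q + 1) = q ^ 6 - 1 := by
    obtain ⟨m, rfl⟩ : ∃ m, q = m + 1 := ⟨q - 1, by omega⟩
    simp only [Nat.add_sub_cancel]
    symm
    apply Nat.sub_eq_of_eq_add
    ring
  have hgmonic := stmt19_gmonic (q := q) hq2 a₀ a₁ a₂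
  obtain ⟨hnodup, hcard, hprod⟩ := stmt19_monic_dvd_facts hgmonic (by rw [hL]; exact hdvd)
  set K := (X ^ q ^ 3 - (C a₂ * X ^ q ^ 2 + C a₁ * X ^ q + C a₀ * X) : L[X]).roots.toFinset
    with hKdef
  have hroots_val : (X ^ q ^ 3 - (C a₂ * X ^ q ^ 2 + C a₁ * X ^ q + C a₀ * X) : L[X]).roots
      = K.val := by
    rw [hKdef, Multiset.toFinset_val, Multiset.dedup_eq_self.mpr hnodup]
  have hKprod : (X ^ q ^ 3 - (C a₂ * X ^ q ^ 2 + C a₁ * X ^ q + C a₀ * X) : L[X])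
      = ∏ x ∈ K, (X - C x) := by
    rw [Finset.prod_eq_multiset_prod, ← hroots_val]; exact hprod
  have hKroot : ∀ x ∈ K, x ^ q ^ 3 - (a₂ * x ^ q ^ 2 + a₁ * x ^ q + a₀ * x) = 0 := by
    intro x hx
    have := (mem_roots hgmonic.ne_zero).mp (Multiset.mem_toFinset.mp hx)
    simpa [IsRoot, eval_pow] using this
  have hKmem : ∀ x : L, x ^ q ^ 3 - (a₂ * x ^ q ^ 2 + a₁ * x ^ q + a₀ * x) = 0 → x ∈ K := by
    intro x hx
    refine Multiset.mem_toFinset.mpr ((mem_roots hgmonic.ne_zero).mpr ?_)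
    simpa [IsRoot, eval_pow] using hx
  have h0K : (0 : L) ∈ K := by
    refine hKmem 0 ?_
    rw [zero_pow (by omega : q ^ 3 ≠ 0), zero_pow (by omega : q ^ 2 ≠ 0),
      zero_pow hq0]
    ring
  -- coefficient of X
  have hcoeff : -a₀ = ∏ x ∈ K.erase 0, (-x) := by
    have hKsplit : (∏ x ∈ K, (X - C x)) = X * ∏ x ∈ K.erase 0, (X - C x) := by
      rw [← Finset.mul_prod_erase K _ h0K, map_zero, sub_zero]
    have h1 := congrArg (fun P => coeff P 1) (hKprod.trans hKsplit)
    rw [coeff_X_mul _ 0, coeff_zero_eq_eval_zero, eval_prod] at h1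
    have e3 : ¬ ((1:ℕ) = q ^ 3) := by omega
    have e2 : ¬ ((1:ℕ) = q ^ 2) := by omega
    have e1 : ¬ ((1:ℕ) = q) := by omega
    rw [coeff_sub, coeff_X_pow, if_neg e3, coeff_add, coeff_add, coeff_C_mul,
      coeff_C_mul, coeff_C_mul, coeff_X_pow, coeff_X_pow, if_neg e2, if_neg e1,
      coeff_X_one] at h1
    simp only [mul_zero, mul_one, zero_add, zero_sub] at h1
    rw [h1]
    exact Finset.prod_congr rfl (fun x _ => by simp)
  -- scaling closure
  have hclose : ∀ l x : L, l ^ q = l →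
      x ^ q ^ 3 - (a₂ * x ^ q ^ 2 + a₁ * x ^ q + a₀ * x) = 0 →
      (l * x) ^ q ^ 3 - (a₂ * (l * x) ^ q ^ 2 + a₁ * (l * x) ^ q + a₀ * (l * x)) = 0 := by
    intro l x hl hx
    have hl2 : l ^ q ^ 2 = l := by
      rw [show q ^ 2 = q * q by ring, pow_mul, hl, hl]
    have hl3 : l ^ q ^ 3 = l := by
      rw [show q ^ 3 = q ^ 2 * q by ring, pow_mul, hl2, hl]
    linear_combination l * hx + x ^ q ^ 3 * hl3 - a₂ * x ^ q ^ 2 * hl2 - a₁ * x ^ q * hl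
  obtain ⟨hZcard, hZprod⟩ := stmt19_Zfacts (L := L) hq2 hL
  have hZne : (X ^ (q - 1) - 1 : L[X]) ≠ 0 := by
    intro h
    have := congrArg (eval 0) h
    rw [eval_sub, eval_pow, eval_X, eval_one, zero_pow hq10, eval_zero] at this
    simpa using this
  have hZmem : ∀ l ∈ (X ^ (q - 1) - 1 : L[X]).roots.toFinset, l ^ (q - 1) = 1 := by
    intro l hl
    have := (mem_roots hZne).mp (Multiset.mem_toFinset.mp hl)
    rw [IsRoot, eval_sub, eval_pow, eval_X, eval_one, sub_eq_zero] at this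
    exact this
  have hZmemrev : ∀ l : L, l ^ (q - 1) = 1 → l ∈ (X ^ (q - 1) - 1 : L[X]).roots.toFinset := by
    intro l hl
    refine Multiset.mem_toFinset.mpr ((mem_roots hZne).mpr ?_)
    rw [IsRoot, eval_sub, eval_pow, eval_X, eval_one, sub_eq_zero]
    exact hl
  -- the fibers of the (q-1)-power map
  have hfib : ∀ y ∈ (K.erase 0).image (fun x => x ^ (q - 1)),
      ∏ x ∈ (K.erase 0).filter (fun x => x ^ (q - 1) = y), x = (-1 : L) ^ q * y := by
    intro y hy
    obtain ⟨k₀, hk₀, rfl⟩ := mem_image.mp hy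
    have hk₀0 : k₀ ≠ 0 := (mem_erase.mp hk₀).1
    have hset : (K.erase 0).filter (fun x => x ^ (q - 1) = k₀ ^ (q - 1))
        = ((X ^ (q - 1) - 1 : L[X]).roots.toFinset).image (· * k₀) := by
      ext x
      simp only [mem_filter, mem_image]
      constructor
      · rintro ⟨hxK', hxy⟩
        refine ⟨x * k₀⁻¹, hZmemrev _ ?_, by field_simp⟩
        rw [mul_pow, hxy, inv_pow, mul_inv_cancel₀ (pow_ne_zero _ hk₀0)]
      · rintro ⟨l, hlZ, rfl⟩
        have hl1 : l ^ (q - 1) = 1 := hZmem l hlZ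
        have hl0 : l ≠ 0 := by
          rintro rfl
          rw [zero_pow hq10] at hl1
          exact zero_ne_one hl1
        have hlq : l ^ q = l := by
          conv_lhs => rw [show q = (q - 1) + 1 by omega]
          rw [pow_succ, hl1, one_mul]
        refine ⟨mem_erase.mpr ⟨mul_ne_zero hl0 hk₀0, ?_⟩, by rw [mul_pow, hl1, one_mul]⟩
        exact hKmem _ (hclose l k₀ hlq (hKroot k₀ (mem_of_mem_erase hk₀)))
    rw [hset, Finset.prod_image (fun a _ b _ h => mul_right_cancel₀ hk₀0 h),
      Finset.prod_mul_distrib, Finset.prod_const, hZprod, hZcard]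
  have hPP : ∏ x ∈ K.erase 0, x
      = (-1 : L) ^ (q * ((K.erase 0).image (fun x => x ^ (q - 1))).card)
          * ∏ y ∈ (K.erase 0).image (fun x => x ^ (q - 1)), y := by
    rw [← Finset.prod_fiberwise_of_maps_to (t := (K.erase 0).image (fun x => x ^ (q - 1)))
        (fun x hx => mem_image_of_mem _ hx) (fun x => x),
      Finset.prod_congr rfl hfib, Finset.prod_mul_distrib, Finset.prod_const, ← pow_mul]
  have hY : (∏ y ∈ (K.erase 0).image (fun x => x ^ (q - 1)), y)
      ^ (q ^ 5 + q ^ 4 + q ^ 3 + q ^ 2 + q + 1) = 1 := by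
    rw [← Finset.prod_pow]
    apply Finset.prod_eq_one
    intro y hy
    obtain ⟨x, hx, rfl⟩ := mem_image.mp hy
    rw [← pow_mul, hs, ← hL]
    exact FiniteField.pow_card_sub_one_eq_one x (mem_erase.mp hx).1
  have hneg : ∏ x ∈ K.erase 0, (-x) = (-1 : L) ^ (K.erase 0).card * ∏ x ∈ K.erase 0, x := by
    rw [Finset.prod_congr rfl (fun l _ => (neg_one_mul l).symm), Finset.prod_mul_distrib,
      Finset.prod_const]
  have ha : a₀ = (-1 : L) ^ (1 + (K.erase 0).card
        + q * ((K.erase 0).image (fun x => x ^ (q - 1))).card)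
      * ∏ y ∈ (K.erase 0).image (fun x => x ^ (q - 1)), y := by
    linear_combination (-1 : L) * hcoeff - hneg - ((-1 : L) ^ (K.erase 0).card) * hPP
  rw [ha, mul_pow, hY, mul_one, ← pow_mul,
    mul_comm (1 + (K.erase 0).card + q * ((K.erase 0).image (fun x => x ^ (q - 1))).card),
    pow_mul]
  rcases Nat.even_or_odd q with hev | hod
  · have hp2 : p = 2 := by
      rcases (Fact.out : p.Prime).eq_two_or_odd' with h | h
      · exact h
      · exact absurd (hq ▸ h.pow) (Nat.not_odd_iff_even.mpr hev)
    have h2 : (2 : L) = 0 := by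
      have := CharP.cast_eq_zero L p
      rw [hp2] at this
      exact_mod_cast this
    have hneg1 : (-1 : L) = 1 := by linear_combination -h2
    rw [hneg1, one_pow, one_pow]
  · have h1 : Even (q + 1) := by
      rw [Nat.even_iff]
      rw [Nat.odd_iff] at hod
      omega
    have heven : Even (q ^ 5 + q ^ 4 + q ^ 3 + q ^ 2 + q + 1) := by
      rw [show q ^ 5 + q ^ 4 + q ^ 3 + q ^ 2 + q + 1 = (q + 1) * (q ^ 4 + q ^ 2 + 1) by ring]
      exact h1.mul_right _
    rw [heven.neg_one_pow, one_pow]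

end Norm

/-- `f(x) = a_0 x + a_1 x^q + a_2 x^{q^2} - x^{q^3}` over `F_{q^6}` with
`a_0 ≠ 0` has exactly `q^3` roots iff `N_{q^6/q}(a_0) = 1`,
`a_0^{q^3+q+1} + a_2^{q^3} a_1^{q^2} a_0^{q+1} - a_2^q a_1 = a_0^q`,
`a_2^{q+1} = -a_0^{q^3+q^2+q+1} a_1^{q^4} - a_1^q`, and
`a_1^{q+1} = a_2 a_0^q + a_0^{q^2+q+1} a_2^{q^3}`. -/
theorem stmt19 (q : ℕ) (hq : IsPrimePow q)
    (L : Type*) [Field L] [Fintype L] (hL : Fintype.card L = q ^ 6)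
    (a₀ a₁ a₂ : L) (ha₀ : a₀ ≠ 0) :
    Set.ncard {x : L | a₀ * x + a₁ * x ^ q + a₂ * x ^ q ^ 2 - x ^ q ^ 3 = 0} = q ^ 3
      ↔ (a₀ ^ ((q ^ 6 - 1) / (q - 1)) = 1 ∧
         a₀ ^ (q ^ 3 + q + 1) + a₂ ^ q ^ 3 * a₁ ^ q ^ 2 * a₀ ^ (q + 1) - a₂ ^ q * a₁ = a₀ ^ q ∧
         a₂ ^ (q + 1) = -(a₀ ^ (q ^ 3 + q ^ 2 + q + 1) * a₁ ^ q ^ 4) - a₁ ^ q ∧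
         a₁ ^ (q + 1) = a₂ * a₀ ^ q + a₀ ^ (q ^ 2 + q + 1) * a₂ ^ q ^ 3) := by
  classical
  obtain ⟨p, k, hpp, hk, hqpk⟩ := hq
  have hp : Nat.Prime p := hpp.nat_prime
  haveI : Fact p.Prime := ⟨hp⟩
  have hq' : q = p ^ k := hqpk.symm
  have hq2 : 2 ≤ q := by
    calc 2 ≤ p := hp.two_le
    _ ≤ p ^ k := Nat.le_self_pow hk.ne' p
    _ = q := hqpk
  haveI : CharP L (ringChar L) := ringChar.charP L
  obtain ⟨m, hrp, hcardL⟩ := FiniteField.card L (ringChar L)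
  have hpchar : ringChar L = p := by
    have h1 : ringChar L ^ (m : ℕ) = p ^ (k * 6) := by
      rw [← hcardL, hL, hq', ← pow_mul]
    have h2 : ringChar L ∣ p ^ (k * 6) := h1 ▸ dvd_pow_self (ringChar L) m.2.ne'
    exact (Nat.prime_dvd_prime_iff_eq hrp hp).mp (hrp.dvd_of_dvd_pow h2)
  haveI hchar : CharP L p := hpchar ▸ ringChar.charP L
  have hq0 : q ≠ 0 := by omega
  have ha₀q : a₀ ^ q ≠ 0 := pow_ne_zero q ha₀
  -- identify the root set with the root set of the monic polynomial g
  have hSg : {x : L | a₀ * x + a₁ * x ^ q + a₂ * x ^ q ^ 2 - x ^ q ^ 3 = 0}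
      = {x : L | eval x (X ^ q ^ 3 - (C a₂ * X ^ q ^ 2 + C a₁ * X ^ q + C a₀ * X) : L[X]) = 0} := by
    ext x
    simp only [Set.mem_setOf_eq, eval_sub, eval_add, eval_mul, eval_pow, eval_C, eval_X]
    constructor
    · intro h; linear_combination -h
    · intro h; linear_combination -h
  have hmonic := stmt19_gmonic (q := q) hq2 a₀ a₁ a₂
  have hdeg := stmt19_gdeg (q := q) hq2 a₀ a₁ a₂
  have hdvd_iff := stmt19_dvd_iff (L := L) (p := p) (k := k) hq' hq2 a₀ a₁ a₂
    (a₁ ^ q ^ 3 + a₂ ^ q ^ 3 * a₂ ^ q ^ 2)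
    (a₀ ^ q ^ 3 + a₂ ^ q ^ 3 * a₁ ^ q ^ 2 + (a₁ ^ q ^ 3 + a₂ ^ q ^ 3 * a₂ ^ q ^ 2) * a₂ ^ q)
    ((a₀ ^ q ^ 3 + a₂ ^ q ^ 3 * a₁ ^ q ^ 2
        + (a₁ ^ q ^ 3 + a₂ ^ q ^ 3 * a₂ ^ q ^ 2) * a₂ ^ q) * a₀ - 1)
    ((a₁ ^ q ^ 3 + a₂ ^ q ^ 3 * a₂ ^ q ^ 2) * a₀ ^ q
      + (a₀ ^ q ^ 3 + a₂ ^ q ^ 3 * a₁ ^ q ^ 2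
          + (a₁ ^ q ^ 3 + a₂ ^ q ^ 3 * a₂ ^ q ^ 2) * a₂ ^ q) * a₁)
    (a₂ ^ q ^ 3 * a₀ ^ q ^ 2 + (a₁ ^ q ^ 3 + a₂ ^ q ^ 3 * a₂ ^ q ^ 2) * a₁ ^ q
      + (a₀ ^ q ^ 3 + a₂ ^ q ^ 3 * a₁ ^ q ^ 2
          + (a₁ ^ q ^ 3 + a₂ ^ q ^ 3 * a₂ ^ q ^ 2) * a₂ ^ q) * a₂)
    rfl rfl rfl rfl rfl
  have hcount_iff : Set.ncard
      {x : L | a₀ * x + a₁ * x ^ q + a₂ * x ^ q ^ 2 - x ^ q ^ 3 = 0} = q ^ 3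
      ↔ (X ^ q ^ 3 - (C a₂ * X ^ q ^ 2 + C a₁ * X ^ q + C a₀ * X) : L[X]) ∣ X ^ q ^ 6 - X := by
    constructor
    · intro h
      have h2 := stmt19_dvd_of_ncard hmonic (by rw [hdeg, ← hSg, h])
      rwa [hL] at h2
    · intro h
      have h2 := stmt19_ncard_of_dvd hmonic (by rw [hL]; exact h)
      rw [hSg, h2, hdeg]
  have hs : (q - 1) * (q ^ 5 + q ^ 4 + q ^ 3 + q ^ 2 + q + 1) = q ^ 6 - 1 := by
    obtain ⟨m', rfl⟩ : ∃ m', q = m' + 1 := ⟨q - 1, by omega⟩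
    simp only [Nat.add_sub_cancel]
    symm
    apply Nat.sub_eq_of_eq_add
    ring
  have hsdiv : (q ^ 6 - 1) / (q - 1) = q ^ 5 + q ^ 4 + q ^ 3 + q ^ 2 + q + 1 :=
    Nat.div_eq_of_eq_mul_left (by omega) (by rw [← hs]; ring)
  have h6 : ∀ x : L, x ^ q ^ 6 = x := by
    intro x; rw [← hL]; exact FiniteField.pow_card x
  rw [hcount_iff, hsdiv]
  constructor
  · rintro hdvd
    obtain ⟨he0, he1, he2⟩ := hdvd_iff.mp hdvd
    have hA := stmt19_norm hq' hq2 hL a₀ a₁ a₂ hdvd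
    have hEb : (a₁ ^ q ^ 3 + a₂ ^ q ^ 3 * a₂ ^ q ^ 2) * a₀ ^ q * a₀ + a₁ = 0 := by
      linear_combination a₀ * he1 - a₁ * he0
    refine ⟨hA, ?_, ?_, ?_⟩
    · linear_combination (a₀ ^ q + a₂ ^ q * a₁) * he0 - a₂ ^ q * a₀ * he1
    · -- condition C, via the σ⁴-shift of hEb and the norm condition
      have hF : ∀ x y : L, (x + y) ^ q ^ 4 = x ^ q ^ 4 + y ^ q ^ 4 := by
        intro x y
        rw [hq', ← pow_mul]
        exact add_pow_char_pow x y p (k * 4)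
      have hEb4 : (a₁ ^ q + a₂ ^ q * a₂) * a₀ ^ q ^ 5 * a₀ ^ q ^ 4 + a₁ ^ q ^ 4 = 0 := by
        have h := congrArg (· ^ q ^ 4) hEb
        simp only [hF, mul_pow, ← pow_mul, zero_pow (pow_ne_zero 4 hq0)] at h
        rw [show q ^ 3 * q ^ 4 = q ^ 6 * q by ring, show q ^ 2 * q ^ 4 = q ^ 6 by ring,
          show q * q ^ 4 = q ^ 5 by ring, pow_mul, h6 a₁, h6 a₂, pow_mul, h6 a₂] at h
        linear_combination h
      have hCx : a₀ ^ q ^ 5 * a₀ ^ q ^ 4 *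
          (a₂ ^ (q + 1) + a₀ ^ (q ^ 3 + q ^ 2 + q + 1) * a₁ ^ q ^ 4 + a₁ ^ q) = 0 := by
        linear_combination hEb4 + a₁ ^ q ^ 4 * hA
      have h5 : a₀ ^ q ^ 5 ≠ 0 := pow_ne_zero _ ha₀
      have h4' : a₀ ^ q ^ 4 ≠ 0 := pow_ne_zero _ ha₀
      rcases mul_eq_zero.mp hCx with h | h
      · rcases mul_eq_zero.mp h with h | h
        · exact absurd h h5
        · exact absurd h h4'
      · linear_combination h
    · -- condition D
      by_cases hb : (a₁ ^ q ^ 3 + a₂ ^ q ^ 3 * a₂ ^ q ^ 2) = 0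
      · have hcc : (a₀ ^ q ^ 3 + a₂ ^ q ^ 3 * a₁ ^ q ^ 2
            + (a₁ ^ q ^ 3 + a₂ ^ q ^ 3 * a₂ ^ q ^ 2) * a₂ ^ q) * a₀ = 1 := by
          linear_combination he0
        have ha₁ : a₁ = 0 := by
          have h1 : (a₀ ^ q ^ 3 + a₂ ^ q ^ 3 * a₁ ^ q ^ 2
              + (a₁ ^ q ^ 3 + a₂ ^ q ^ 3 * a₂ ^ q ^ 2) * a₂ ^ q) * a₁ = 0 := by
            linear_combination he1 - a₀ ^ q * hb
          rcases mul_eq_zero.mp h1 with h | h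
          · rw [h, zero_mul] at hcc
            exact absurd hcc zero_ne_one
          · exact h
        have ha₂ : a₂ = 0 := by
          rw [ha₁, zero_pow (pow_ne_zero 3 hq0), zero_add] at hb
          rcases mul_eq_zero.mp hb with h | h
          · exact pow_eq_zero_iff (pow_ne_zero 3 hq0) |>.mp h
          · exact pow_eq_zero_iff (pow_ne_zero 2 hq0) |>.mp h
        rw [ha₁, ha₂, zero_pow (by omega : q + 1 ≠ 0), zero_pow (pow_ne_zero 3 hq0),
          zero_mul, mul_zero, add_zero]
      · have hD0 : (a₁ ^ q ^ 3 + a₂ ^ q ^ 3 * a₂ ^ q ^ 2)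
            * (a₁ ^ (q + 1) - (a₂ * a₀ ^ q + a₀ ^ (q ^ 2 + q + 1) * a₂ ^ q ^ 3)) = 0 := by
          linear_combination a₁ * he2 - a₂ * he1 - a₂ ^ q ^ 3 * a₀ ^ q ^ 2 * a₀ * he1
            + a₂ ^ q ^ 3 * a₀ ^ q ^ 2 * a₁ * he0
        rcases mul_eq_zero.mp hD0 with h | h
        · exact absurd h hb
        · linear_combination h
  · rintro ⟨hA, hB, hC, hD⟩
    have hF2 : ∀ x y : L, (x + y) ^ q ^ 2 = x ^ q ^ 2 + y ^ q ^ 2 := by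
      intro x y
      rw [hq', ← pow_mul]
      exact add_pow_char_pow x y p (k * 2)
    have hC0 : a₂ ^ (q + 1) + a₀ ^ (q ^ 3 + q ^ 2 + q + 1) * a₁ ^ q ^ 4 + a₁ ^ q = 0 := by
      linear_combination hC
    have hC2 : a₂ ^ (q ^ 3 + q ^ 2) + a₀ ^ (q ^ 5 + q ^ 4 + q ^ 3 + q ^ 2) * a₁ + a₁ ^ q ^ 3
        = 0 := by
      have h := congrArg (· ^ q ^ 2) hC0
      simp only [hF2, mul_pow, ← pow_mul, zero_pow (pow_ne_zero 2 hq0)] at h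
      rw [show q ^ 4 * q ^ 2 = q ^ 6 by ring] at h
      rw [h6 a₁] at h
      rw [show (q + 1) * q ^ 2 = q ^ 3 + q ^ 2 by ring,
        show (q ^ 3 + q ^ 2 + q + 1) * q ^ 2 = q ^ 5 + q ^ 4 + q ^ 3 + q ^ 2 by ring,
        show q * q ^ 2 = q ^ 3 by ring] at h
      linear_combination h
    have hEb : (a₁ ^ q ^ 3 + a₂ ^ q ^ 3 * a₂ ^ q ^ 2) * a₀ ^ q * a₀ + a₁ = 0 := by
      linear_combination a₀ * a₀ ^ q * hC2 - a₁ * hA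
    have he0 : (a₀ ^ q ^ 3 + a₂ ^ q ^ 3 * a₁ ^ q ^ 2
        + (a₁ ^ q ^ 3 + a₂ ^ q ^ 3 * a₂ ^ q ^ 2) * a₂ ^ q) * a₀ - 1 = 0 := by
      have h01 : a₀ ^ q * ((a₀ ^ q ^ 3 + a₂ ^ q ^ 3 * a₁ ^ q ^ 2
          + (a₁ ^ q ^ 3 + a₂ ^ q ^ 3 * a₂ ^ q ^ 2) * a₂ ^ q) * a₀ - 1) = 0 := by
        linear_combination hB + a₂ ^ q * hEb
      rcases mul_eq_zero.mp h01 with h | h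
      · exact absurd h ha₀q
      · exact h
    have he1 : (a₁ ^ q ^ 3 + a₂ ^ q ^ 3 * a₂ ^ q ^ 2) * a₀ ^ q
        + (a₀ ^ q ^ 3 + a₂ ^ q ^ 3 * a₁ ^ q ^ 2
            + (a₁ ^ q ^ 3 + a₂ ^ q ^ 3 * a₂ ^ q ^ 2) * a₂ ^ q) * a₁ = 0 := by
      have h00 : a₀ * ((a₁ ^ q ^ 3 + a₂ ^ q ^ 3 * a₂ ^ q ^ 2) * a₀ ^ q
          + (a₀ ^ q ^ 3 + a₂ ^ q ^ 3 * a₁ ^ q ^ 2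
              + (a₁ ^ q ^ 3 + a₂ ^ q ^ 3 * a₂ ^ q ^ 2) * a₂ ^ q) * a₁) = 0 := by
        linear_combination hEb + a₁ * he0
      rcases mul_eq_zero.mp h00 with h | h
      · exact absurd h ha₀
      · exact h
    have he2 : a₂ ^ q ^ 3 * a₀ ^ q ^ 2 + (a₁ ^ q ^ 3 + a₂ ^ q ^ 3 * a₂ ^ q ^ 2) * a₁ ^ q
        + (a₀ ^ q ^ 3 + a₂ ^ q ^ 3 * a₁ ^ q ^ 2
            + (a₁ ^ q ^ 3 + a₂ ^ q ^ 3 * a₂ ^ q ^ 2) * a₂ ^ q) * a₂ = 0 := by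
      by_cases ha₁ : a₁ = 0
      · have ha₂ : a₂ = 0 := by
          have h1 : a₂ ^ (q + 1) = 0 := by
            rw [ha₁] at hC0
            rw [zero_pow (pow_ne_zero 4 hq0), zero_pow hq0] at hC0
            linear_combination hC0
          exact pow_eq_zero_iff (by omega : q + 1 ≠ 0) |>.mp h1
        rw [ha₁, ha₂]
        rw [zero_pow (pow_ne_zero 3 hq0), zero_pow (pow_ne_zero 2 hq0), zero_pow hq0]
        ring
      · have h10 : a₁ * (a₂ ^ q ^ 3 * a₀ ^ q ^ 2
            + (a₁ ^ q ^ 3 + a₂ ^ q ^ 3 * a₂ ^ q ^ 2) * a₁ ^ q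
            + (a₀ ^ q ^ 3 + a₂ ^ q ^ 3 * a₁ ^ q ^ 2
                + (a₁ ^ q ^ 3 + a₂ ^ q ^ 3 * a₂ ^ q ^ 2) * a₂ ^ q) * a₂) = 0 := by
          linear_combination (a₁ ^ q ^ 3 + a₂ ^ q ^ 3 * a₂ ^ q ^ 2) * hD + a₂ * he1
            + a₂ ^ q ^ 3 * a₀ ^ q ^ 2 * a₀ * he1 - a₂ ^ q ^ 3 * a₀ ^ q ^ 2 * a₁ * he0
        rcases mul_eq_zero.mp h10 with h | h
        · exact absurd h ha₁
        · exact h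
    exact hdvd_iff.mpr ⟨he0, he1, he2⟩
end
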